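/- Data-processing inequality for log-determinant mutual information: for any bipartite positive definite matrix V_AB and any positive semidefinite matrix K_A on system A, I_M(A:B)_{V_AB + K_A ⊕ 0_B} ≤ I_M(A:B)_{V_AB}. -/

import Mathlib

open Matrix

section Helpers

variable {n : Type*} [Fintype n] [DecidableEq n]

/-- `det (1 + Q) ≥ 1` for `Q` positive semidefinite. -/
lemma one_le_det_one_add {Q : Matrix n n ℝ} (hQ : Q.PosSemidef) : 1 ≤ (1 + Q).det := by
  have hH := hQ.1
  set U : Matrix n n ℝ := (hH.eigenvectorUnitary : Matrix n n ℝ) with hU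
  have hUU : U * star U = 1 := Matrix.mem_unitaryGroup_iff.mp hH.eigenvectorUnitary.2
  have key : 1 + Q = U * (1 + diagonal (RCLike.ofReal ∘ hH.eigenvalues)) * star U := by
    rw [Matrix.mul_add, Matrix.add_mul, Matrix.mul_one, hUU]
    conv_lhs => rw [hH.spectral_theorem]
    rfl
  rw [key, Matrix.det_mul_right_comm, hUU, Matrix.one_mul,
    ← Matrix.diagonal_one, Matrix.diagonal_add, Matrix.det_diagonal]
  refine le_trans (le_of_eq Finset.prod_const_one.symm)
    (Finset.prod_le_prod (fun i _ => zero_le_one) (fun i _ => ?_))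
  have := hQ.eigenvalues_nonneg i
  simp only [Pi.add_apply, Pi.one_apply, Function.comp_apply, RCLike.ofReal_real_eq_id, id_eq]
  linarith

open scoped MatrixOrder in
/-- Determinant monotonicity: `det M ≤ det (M + P)` for `M` positive definite and `P`
positive semidefinite. -/
lemma det_le_det_add {M P : Matrix n n ℝ} (hM : M.PosDef) (hP : P.PosSemidef) :
    M.det ≤ (M + P).det := by
  have hMdet : IsUnit M.det := isUnit_iff_ne_zero.mpr hM.det_pos.ne'
  have hMinv : M * M⁻¹ = 1 := Matrix.mul_nonsing_inv M hMdet
  set R := CFC.sqrt P with hRdef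
  have hRR : R * R = P := CFC.sqrt_mul_sqrt_self P hP.nonneg
  have h1 : M + P = M * (1 + M⁻¹ * P) := by
    rw [Matrix.mul_add, Matrix.mul_one, ← Matrix.mul_assoc, hMinv, Matrix.one_mul]
  have h3 : (R * M⁻¹ * R).PosSemidef := by
    have := hM.inv.posSemidef.conjTranspose_mul_mul_same R
    rwa [(Matrix.nonneg_iff_posSemidef.mp (CFC.sqrt_nonneg P)).1] at this
  have h2 : (1 + M⁻¹ * P).det = (1 + R * M⁻¹ * R).det := by
    rw [← hRR, ← Matrix.mul_assoc, Matrix.det_one_add_mul_comm, ← Matrix.mul_assoc]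
  have h4 : 1 ≤ (1 + M⁻¹ * P).det := by
    rw [h2]; exact one_le_det_one_add h3
  calc M.det = M.det * 1 := (mul_one _).symm
    _ ≤ M.det * (1 + M⁻¹ * P).det := by
        exact mul_le_mul_of_nonneg_left h4 hM.det_pos.le
    _ = (M + P).det := by rw [h1, Matrix.det_mul]

/-- Antitonicity of the inverse: `A⁻¹ - (A + K)⁻¹` is positive semidefinite. -/
lemma inv_sub_inv_posSemidef {A K : Matrix n n ℝ} (hA : A.PosDef) (hK : K.PosSemidef) :
    (A⁻¹ - (A + K)⁻¹).PosSemidef := by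
  set N := A + K with hNdef
  have hN : N.PosDef := hA.add_posSemidef hK
  have hAdet : IsUnit A.det := isUnit_iff_ne_zero.mpr hA.det_pos.ne'
  have hNdet : IsUnit N.det := isUnit_iff_ne_zero.mpr hN.det_pos.ne'
  have hNN : N * N⁻¹ = 1 := Matrix.mul_nonsing_inv N hNdet
  have hNN' : N⁻¹ * N = 1 := Matrix.nonsing_inv_mul N hNdet
  have hAA : A * A⁻¹ = 1 := Matrix.mul_nonsing_inv A hAdet
  have hAA' : A⁻¹ * A = 1 := Matrix.nonsing_inv_mul A hAdet
  have e1 : A⁻¹ - N⁻¹ = N⁻¹ * K * A⁻¹ := by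
    calc A⁻¹ - N⁻¹ = N⁻¹ * (N * A⁻¹) - N⁻¹ * 1 := by
          rw [← Matrix.mul_assoc, hNN', Matrix.one_mul, Matrix.mul_one]
      _ = N⁻¹ * (N * A⁻¹ - 1) := by rw [Matrix.mul_sub, Matrix.mul_one]
      _ = N⁻¹ * (K * A⁻¹) := by
          rw [hNdef, Matrix.add_mul, hAA, add_sub_cancel_left]
      _ = N⁻¹ * K * A⁻¹ := by rw [Matrix.mul_assoc]
  have hsum : K + K * A⁻¹ * K = K * A⁻¹ * N := by
    rw [hNdef, Matrix.mul_add, Matrix.mul_assoc K A⁻¹ A, hAA', Matrix.mul_one]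
  have e2 : A⁻¹ - N⁻¹ = N⁻¹ * (K + K * A⁻¹ * K) * N⁻¹ := by
    rw [e1, hsum]
    calc N⁻¹ * K * A⁻¹ = N⁻¹ * K * A⁻¹ * (N * N⁻¹) := by rw [hNN, Matrix.mul_one]
      _ = N⁻¹ * (K * A⁻¹ * N) * N⁻¹ := by simp only [Matrix.mul_assoc]
  have h4 : (K * A⁻¹ * K).PosSemidef := by
    have := hA.inv.posSemidef.conjTranspose_mul_mul_same K
    rwa [hK.1] at this
  have h5 := (hK.add h4).conjTranspose_mul_mul_same N⁻¹
  rw [hN.1.inv] at h5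
  rw [e2]
  exact h5

variable {m : Type*} [Fintype m] [DecidableEq m]

/-- The `(1,1)` block of a positive definite block matrix is positive definite. -/
lemma posDef_blocks₁₁ {A : Matrix m m ℝ} {B : Matrix m n ℝ} {C : Matrix n m ℝ}
    {D : Matrix n n ℝ} (h : (fromBlocks A B C D).PosDef) : A.PosDef := by
  obtain ⟨hA, -, -, -⟩ := Matrix.isHermitian_fromBlocks_iff.mp h.1
  refine Matrix.PosDef.of_dotProduct_mulVec_pos hA fun x hx => ?_
  have hne : (Sum.elim x (0 : n → ℝ)) ≠ 0 := by
    intro hc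
    exact hx (funext fun i => congrFun hc (Sum.inl i))
  have := h.dotProduct_mulVec_pos hne
  simpa [Function.star_sumElim, Matrix.fromBlocks_mulVec,
    sumElim_dotProduct_sumElim] using this

/-- The `(2,2)` block of a positive definite block matrix is positive definite. -/
lemma posDef_blocks₂₂ {A : Matrix m m ℝ} {B : Matrix m n ℝ} {C : Matrix n m ℝ}
    {D : Matrix n n ℝ} (h : (fromBlocks A B C D).PosDef) : D.PosDef := by
  obtain ⟨-, -, -, hD⟩ := Matrix.isHermitian_fromBlocks_iff.mp h.1
  refine Matrix.PosDef.of_dotProduct_mulVec_pos hD fun x hx => ?_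
  have hne : (Sum.elim (0 : m → ℝ) x) ≠ 0 := by
    intro hc
    exact hx (funext fun i => congrFun hc (Sum.inr i))
  have := h.dotProduct_mulVec_pos hne
  simpa [Function.star_sumElim, Matrix.fromBlocks_mulVec,
    sumElim_dotProduct_sumElim] using this

/-- Positive definiteness of the Schur complement of a positive definite block matrix. -/
lemma schur_posDef {A : Matrix m m ℝ} {B : Matrix m n ℝ} {D : Matrix n n ℝ}
    (hA : A.PosDef) [Invertible A]
    (h : (fromBlocks A B Bᴴ D).PosDef) : (D - Bᴴ * A⁻¹ * B).PosDef := by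
  refine Matrix.PosDef.of_dotProduct_mulVec_pos ((Matrix.IsHermitian.fromBlocks₁₁ B D hA.1).mp h.1) fun x hx => ?_
  have hne : (Sum.elim (-((A⁻¹ * B) *ᵥ x)) x) ≠ 0 := by
    intro hc
    exact hx (funext fun i => congrFun hc (Sum.inr i))
  have := h.dotProduct_mulVec_pos hne
  rw [Matrix.dotProduct_mulVec, Matrix.schur_complement_eq₁₁ B D _ _ hA.1,
    neg_add_cancel, dotProduct_zero, zero_add] at this
  rw [Matrix.dotProduct_mulVec]
  exact this

/-- `fromBlocks K 0 0 0` is positive semidefinite when `K` is. -/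
lemma fromBlocks_posSemidef {K : Matrix m m ℝ} (hK : K.PosSemidef) :
    (fromBlocks K (0 : Matrix m n ℝ) (0 : Matrix n m ℝ) (0 : Matrix n n ℝ)).PosSemidef := by
  refine Matrix.PosSemidef.of_dotProduct_mulVec_nonneg ?_ ?_
  · exact Matrix.isHermitian_fromBlocks_iff.mpr
      ⟨hK.1, by simp, by simp, Matrix.isHermitian_zero⟩
  · intro x
    obtain ⟨u, v, rfl⟩ : ∃ u v, x = Sum.elim u v :=
      ⟨x ∘ Sum.inl, x ∘ Sum.inr, (Sum.elim_comp_inl_inr x).symm⟩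
    have := hK.dotProduct_mulVec_nonneg u
    simpa [Function.star_sumElim, Matrix.fromBlocks_mulVec,
      sumElim_dotProduct_sumElim] using this

end Helpers

/-- The log-determinant mutual information of a bipartite positive matrix. -/
noncomputable def IM {α β : Type*} [Fintype α] [Fintype β] [DecidableEq α] [DecidableEq β]
    (W : Matrix (α ⊕ β) (α ⊕ β) ℝ) : ℝ :=
  (1/2) * Real.logb 2 ((W.toBlocks₁₁.det * W.toBlocks₂₂.det) / W.det)

/-- Data-processing inequality for the log-determinant mutual information: adding a
positive semidefinite matrix `K_A` on system `A` cannot increase it,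
`I_M(A:B)_{V + K_A ⊕ 0} ≤ I_M(A:B)_V`. -/
theorem IM_data_processing {α β : Type*} [Fintype α] [Fintype β]
    [DecidableEq α] [DecidableEq β]
    (V : Matrix (α ⊕ β) (α ⊕ β) ℝ) (hV : V.PosDef)
    (K : Matrix α α ℝ) (hK : K.PosSemidef) :
    IM (V + fromBlocks K 0 0 0) ≤ IM V := by
  set A := V.toBlocks₁₁ with hAdef
  set B := V.toBlocks₁₂ with hBdef
  set D := V.toBlocks₂₂ with hDdef
  have hC : V.toBlocks₂₁ = Bᴴ := by
    ext i j
    exact (hV.1.apply (Sum.inr i) (Sum.inl j)).symm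
  have hVeq : V = fromBlocks A B Bᴴ D := by
    rw [← hC, hAdef, hBdef, hDdef, Matrix.fromBlocks_toBlocks]
  have hVb : (fromBlocks A B Bᴴ D).PosDef := hVeq ▸ hV
  have hA : A.PosDef := posDef_blocks₁₁ hVb
  have hD : D.PosDef := posDef_blocks₂₂ hVb
  have hAK : (A + K).PosDef := hA.add_posSemidef hK
  have hWeq : V + fromBlocks K 0 0 0 = fromBlocks (A + K) B Bᴴ D := by
    rw [hVeq, Matrix.fromBlocks_add]
    simp
  have hWb : (fromBlocks (A + K) B Bᴴ D).PosDef := hWeq ▸ (hV.add_posSemidef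
    (fromBlocks_posSemidef hK))
  haveI : Invertible A := A.invertibleOfIsUnitDet (isUnit_iff_ne_zero.mpr hA.det_pos.ne')
  haveI : Invertible (A + K) :=
    (A + K).invertibleOfIsUnitDet (isUnit_iff_ne_zero.mpr hAK.det_pos.ne')
  set S : Matrix β β ℝ := D - Bᴴ * A⁻¹ * B with hSdef
  set S' : Matrix β β ℝ := D - Bᴴ * (A + K)⁻¹ * B with hS'def
  have hS : S.PosDef := schur_posDef hA hVb
  have hdiff : S' - S = Bᴴ * (A⁻¹ - (A + K)⁻¹) * B := by
    rw [hSdef, hS'def, Matrix.mul_sub, Matrix.sub_mul]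
    abel
  have hdiffPSD : (S' - S).PosSemidef := by
    rw [hdiff]
    exact (inv_sub_inv_posSemidef hA hK).conjTranspose_mul_mul_same B
  have hSS' : S.det ≤ S'.det := by
    have := det_le_det_add hS hdiffPSD
    rwa [add_sub_cancel] at this
  have hS' : S'.PosDef := by
    have := hS.add_posSemidef hdiffPSD
    rwa [add_sub_cancel] at this
  -- determinant formulas
  have hdetV : V.det = A.det * S.det := by
    rw [hVeq, Matrix.det_fromBlocks₁₁, invOf_eq_nonsing_inv]
  have hdetW : (V + fromBlocks K 0 0 0).det = (A + K).det * S'.det := by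
    rw [hWeq, Matrix.det_fromBlocks₁₁, invOf_eq_nonsing_inv]
  have hblocks₁₁ : (V + fromBlocks K 0 0 0).toBlocks₁₁ = A + K := by
    rw [hWeq]; rfl
  have hblocks₂₂ : (V + fromBlocks K 0 0 0).toBlocks₂₂ = D := by
    rw [hWeq]; rfl
  rw [IM, IM, hblocks₁₁, hblocks₂₂, hdetV, hdetW, ← hAdef, ← hDdef]
  rw [mul_div_mul_left _ _ hAK.det_pos.ne', mul_div_mul_left _ _ hA.det_pos.ne']
  have hx : 0 < D.det / S'.det := div_pos hD.det_pos hS'.det_pos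
  have hxy : D.det / S'.det ≤ D.det / S.det :=
    div_le_div_of_nonneg_left hD.det_pos.le hS.det_pos hSS'
  have := Real.logb_le_logb_of_le (one_lt_two) hx hxy
  linarith
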